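/- For every A ≥ 1 and every (x1, x3, x5) ∈ [1, A]³, there exists one and only one triple (x2, x4, x6) ∈ (1/2, A]³ satisfying the system (E): x1 = 2·x2·x4 − (1/2)·(x2/x4 + x4/x2), x3 = 2·x4·x6 − (1/2)·(x4/x6 + x6/x4), x5 = 2·x2·x6 − (1/2)·(x2/x6 + x6/x2). -/

import Mathlib

/- Auxiliary machinery.  In reciprocal coordinates u = 1/x2, v = 1/x4, w = 1/x6
the equation x = 2ab - (1/2)(a/b + b/a) becomes the quadratic relation
u^2 + v^2 + 2*x*u*v = 4. -/

noncomputable def Bf (x α : ℝ) : ℝ := Real.sqrt ((x^2-1)*α^2+4) - x*α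

lemma Bf_cont (x : ℝ) : Continuous (Bf x) := by
  unfold Bf
  exact (Real.continuous_sqrt.comp (by continuity)).sub (by continuity)

lemma Bf_zero (x : ℝ) : Bf x 0 = 2 := by
  unfold Bf
  rw [show (x^2-1)*0^2+4 = 2^2 by ring, Real.sqrt_sq (by norm_num)]
  ring

lemma Bf_two {x : ℝ} (hx : 1 ≤ x) : Bf x 2 = 0 := by
  unfold Bf
  rw [show (x^2-1)*2^2+4 = (2*x)^2 by ring, Real.sqrt_sq (by linarith)]
  ring

lemma Bf_pos {x α : ℝ} (hx : 1 ≤ x) (h0 : 0 ≤ α) (h2 : α < 2) : 0 < Bf x α := by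
  unfold Bf
  have hM : (0:ℝ) ≤ (x^2-1)*α^2+4 := by
    nlinarith [mul_nonneg (show (0:ℝ) ≤ x^2-1 by nlinarith) (sq_nonneg α)]
  have hs := Real.sq_sqrt hM
  have hnn := Real.sqrt_nonneg ((x^2-1)*α^2+4)
  nlinarith [hs, hnn, mul_nonneg (by linarith : (0:ℝ) ≤ x) h0]

lemma Bf_Q {x α : ℝ} (hx : 1 ≤ x) : α^2 + (Bf x α)^2 + 2*x*α*(Bf x α) = 4 := by
  unfold Bf
  have hM : (0:ℝ) ≤ (x^2-1)*α^2+4 := by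
    nlinarith [mul_nonneg (show (0:ℝ) ≤ x^2-1 by nlinarith) (sq_nonneg α)]
  have hs := Real.sq_sqrt hM
  nlinarith [hs]

lemma qmono {x u v u' v' : ℝ} (hx : 0 < x) (hu : 0 < u) (hv : 0 < v) (hv' : 0 < v')
    (hQ : u^2+v^2+2*x*u*v = 4) (hQ' : u'^2+v'^2+2*x*u'*v' = 4) (h : u < u') : v' < v := by
  by_contra hc
  push_neg at hc
  have h1 : u*v < u'*v' := by nlinarith
  nlinarith [mul_pos hx (sub_pos.mpr h1)]

lemma qeq {x u v v' : ℝ} (hx : 0 < x) (hu : 0 < u) (hv : 0 < v) (hv' : 0 < v')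
    (hQ : u^2+v^2+2*x*u*v = 4) (hQ' : u^2+v'^2+2*x*u*v' = 4) : v = v' := by
  have h : (v - v')*(v+v'+2*x*u) = 0 := by linear_combination hQ - hQ'
  rcases mul_eq_zero.mp h with h' | h'
  · linarith
  · nlinarith [mul_pos hx hu]

lemma quniq {x1 x3 x5 u v w u' v' w' : ℝ}
    (hx1 : 0 < x1) (hx3 : 0 < x3) (hx5 : 0 < x5)
    (hu : 0 < u) (hv : 0 < v) (hw : 0 < w)
    (hu' : 0 < u') (hv' : 0 < v') (hw' : 0 < w')
    (Q1 : u^2+v^2+2*x1*u*v = 4) (Q3 : v^2+w^2+2*x3*v*w = 4) (Q5 : u^2+w^2+2*x5*u*w = 4)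
    (Q1' : u'^2+v'^2+2*x1*u'*v' = 4) (Q3' : v'^2+w'^2+2*x3*v'*w' = 4)
    (Q5' : u'^2+w'^2+2*x5*u'*w' = 4) : u = u' ∧ v = v' ∧ w = w' := by
  have key : ∀ a b c a' b' c' : ℝ, 0 < a → 0 < b → 0 < c → 0 < a' → 0 < b' → 0 < c' →
      a^2+b^2+2*x1*a*b = 4 → b^2+c^2+2*x3*b*c = 4 → a^2+c^2+2*x5*a*c = 4 →
      a'^2+b'^2+2*x1*a'*b' = 4 → b'^2+c'^2+2*x3*b'*c' = 4 → a'^2+c'^2+2*x5*a'*c' = 4 →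
      ¬ (a < a') := by
    intro a b c a' b' c' ha hb hc ha' hb' hc' q1 q3 q5 q1' q3' q5' hlt
    have hb2 : b' < b := qmono hx1 ha hb hb' q1 q1' hlt
    have hc2 : c' < c := qmono hx5 ha hc hc' q5 q5' hlt
    have h1 : b'*c' < b*c := by nlinarith
    nlinarith [mul_pos hx3 (sub_pos.mpr h1)]
  rcases lt_trichotomy u u' with h | h | h
  · exact absurd h (key u v w u' v' w' hu hv hw hu' hv' hw' Q1 Q3 Q5 Q1' Q3' Q5')
  · subst h
    have hvv : v = v' := qeq hx1 hu hv hv' Q1 Q1'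
    have hww : w = w' := qeq hx5 hu hw hw' Q5 Q5'
    exact ⟨rfl, hvv, hww⟩
  · exact absurd h (key u' v' w' u v w hu' hv' hw' hu hv hw Q1' Q3' Q5' Q1 Q3 Q5)

lemma both_big_false {x u v : ℝ} (hx : 1 ≤ x) (hu : 1 < u) (hv : 1 < v)
    (hQ : u^2+v^2+2*x*u*v = 4) : False := by
  have huv : 1 < u*v := by nlinarith
  nlinarith [mul_nonneg (by linarith : (0:ℝ) ≤ x - 1) (by linarith : (0:ℝ) ≤ u*v)]

lemma small_big {A x u v : ℝ} (hA : 1 ≤ A) (hx : 1 ≤ x) (hxA : x ≤ A) (hu : 0 < u)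
    (hv : 0 < v) (hQ : u^2+v^2+2*x*u*v = 4) (hsmall : u*A < 1) : 1 < v := by
  by_contra hc
  push_neg at hc
  have hu1 : u < 1 := by nlinarith
  have hxu : x*u ≤ A*u := mul_le_mul_of_nonneg_right hxA hu.le
  have h2 : x*u*v < 1 := by
    have hAuv : A*u*v ≤ A*u := by nlinarith [mul_pos (show (0:ℝ) < A*u by nlinarith) hv]
    have : x*u*v ≤ A*u*v := mul_le_mul_of_nonneg_right hxu hv.le
    nlinarith
  nlinarith

lemma eq_of_Q {x u v : ℝ} (hu : 0 < u) (hv : 0 < v) (hQ : u^2+v^2+2*x*u*v = 4) :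
    x = 2*(1/u)*(1/v) - (1/2)*((1/u)/(1/v) + (1/v)/(1/u)) := by
  field_simp
  linear_combination hQ

lemma Q_of_eq {x a b : ℝ} (ha : 0 < a) (hb : 0 < b)
    (heq : x = 2*a*b - (1/2)*(a/b+b/a)) : (1/a)^2+(1/b)^2+2*x*(1/a)*(1/b) = 4 := by
  rw [heq]
  field_simp
  ring

lemma exists_root {x1 x3 x5 : ℝ} (h1 : 1 ≤ x1) (h3 : 1 ≤ x3) (h5 : 1 ≤ x5) :
    ∃ u v w : ℝ, 0 < u ∧ u < 2 ∧ 0 < v ∧ 0 < w ∧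
      u^2+v^2+2*x1*u*v = 4 ∧ v^2+w^2+2*x3*v*w = 4 ∧ u^2+w^2+2*x5*u*w = 4 := by
  set f : ℝ → ℝ := fun α => (Bf x1 α)^2 + (Bf x5 α)^2 + 2*x3*(Bf x1 α)*(Bf x5 α) - 4 with hf
  have hcont : ContinuousOn f (Set.Icc 0 2) := by
    apply Continuous.continuousOn
    have c1 := Bf_cont x1
    have c5 := Bf_cont x5
    fun_prop
  have hf0 : f 0 = 4 + 8*x3 := by simp [hf, Bf_zero]; ring
  have hf2 : f 2 = -4 := by simp [hf, Bf_two h1, Bf_two h5]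
  have hmem : (0:ℝ) ∈ Set.Icc (f 2) (f 0) := by
    rw [hf0, hf2]
    constructor <;> [linarith; linarith]
  obtain ⟨α, hαmem, hα⟩ := intermediate_value_Icc' (by norm_num : (0:ℝ) ≤ 2) hcont hmem
  obtain ⟨hα0, hα2⟩ := hαmem
  have hane0 : α ≠ 0 := by
    intro h; rw [h, hf0] at hα; linarith
  have hane2 : α ≠ 2 := by
    intro h; rw [h, hf2] at hα; linarith
  have hα0' : 0 < α := lt_of_le_of_ne hα0 (Ne.symm hane0)
  have hα2' : α < 2 := lt_of_le_of_ne hα2 hane2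
  refine ⟨α, Bf x1 α, Bf x5 α, hα0', hα2', Bf_pos h1 hα0 hα2', Bf_pos h5 hα0 hα2', ?_, ?_, ?_⟩
  · exact Bf_Q h1
  · have := hα
    simp only [hf] at this
    nlinarith [this]
  · exact Bf_Q h5

/-- For A ≥ 1 and (x1,x3,x5) ∈ [1,A]³ there is exactly one
(x2,x4,x6) ∈ (1/2, A]³ solving the system (E). -/
theorem stmt_5 (A x1 x3 x5 : ℝ) (hA : 1 ≤ A)
    (h1 : 1 ≤ x1 ∧ x1 ≤ A) (h3 : 1 ≤ x3 ∧ x3 ≤ A) (h5 : 1 ≤ x5 ∧ x5 ≤ A) :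
    ∃! p : ℝ × ℝ × ℝ,
      (1/2 < p.1 ∧ p.1 ≤ A) ∧ (1/2 < p.2.1 ∧ p.2.1 ≤ A) ∧ (1/2 < p.2.2 ∧ p.2.2 ≤ A) ∧
      x1 = 2 * p.1 * p.2.1 - (1/2) * (p.1 / p.2.1 + p.2.1 / p.1) ∧
      x3 = 2 * p.2.1 * p.2.2 - (1/2) * (p.2.1 / p.2.2 + p.2.2 / p.2.1) ∧
      x5 = 2 * p.1 * p.2.2 - (1/2) * (p.1 / p.2.2 + p.2.2 / p.1) := by
  obtain ⟨h1l, h1u⟩ := h1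
  obtain ⟨h3l, h3u⟩ := h3
  obtain ⟨h5l, h5u⟩ := h5
  have hA0 : (0:ℝ) < A := by linarith
  obtain ⟨u, v, w, hu0, hu2, hv0, hw0, Q1, Q3, Q5⟩ := exists_root h1l h3l h5l
  have hv2 : v < 2 := by nlinarith [mul_pos hu0 hv0]
  have hw2 : w < 2 := by nlinarith [mul_pos hu0 hw0]
  have huA : 1 ≤ u*A := by
    by_contra hc
    push_neg at hc
    have hv1 : 1 < v := small_big hA h1l h1u hu0 hv0 Q1 hc
    have hw1 : 1 < w := small_big hA h5l h5u hu0 hw0 Q5 hc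
    exact both_big_false h3l hv1 hw1 Q3
  have hvA : 1 ≤ v*A := by
    by_contra hc
    push_neg at hc
    have hu1 : 1 < u := small_big hA h1l h1u hv0 hu0 (by linear_combination Q1) hc
    have hw1 : 1 < w := small_big hA h3l h3u hv0 hw0 Q3 hc
    exact both_big_false h5l hu1 hw1 Q5
  have hwA : 1 ≤ w*A := by
    by_contra hc
    push_neg at hc
    have hu1 : 1 < u := small_big hA h5l h5u hw0 hu0 (by linear_combination Q5) hc
    have hv1 : 1 < v := small_big hA h3l h3u hw0 hv0 (by linear_combination Q3) hc
    exact both_big_false h1l hu1 hv1 Q1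
  refine ⟨(1/u, 1/v, 1/w), ⟨⟨?_, ?_⟩, ⟨?_, ?_⟩, ⟨?_, ?_⟩, ?_, ?_, ?_⟩, ?_⟩
  · exact one_div_lt_one_div_of_lt hu0 hu2
  · rw [div_le_iff₀ hu0]; nlinarith
  · exact one_div_lt_one_div_of_lt hv0 hv2
  · rw [div_le_iff₀ hv0]; nlinarith
  · exact one_div_lt_one_div_of_lt hw0 hw2
  · rw [div_le_iff₀ hw0]; nlinarith
  · exact eq_of_Q hu0 hv0 Q1
  · exact eq_of_Q hv0 hw0 Q3
  · exact eq_of_Q hu0 hw0 Q5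
  · rintro ⟨a, b, c⟩ ⟨⟨ha2, haA⟩, ⟨hb2, hbA⟩, ⟨hc2, hcA⟩, e1, e3, e5⟩
    simp only at e1 e3 e5 ha2 haA hb2 hbA hc2 hcA
    have ha0 : 0 < a := by linarith
    have hb0 : 0 < b := by linarith
    have hc0 : 0 < c := by linarith
    have qa := Q_of_eq ha0 hb0 e1
    have qb := Q_of_eq hb0 hc0 e3
    have qc := Q_of_eq ha0 hc0 e5
    have h1a : 0 < 1/a := by positivity
    have h1b : 0 < 1/b := by positivity
    have h1c : 0 < 1/c := by positivity
    obtain ⟨euu, evv, eww⟩ := quniq (by linarith : (0:ℝ) < x1) (by linarith : (0:ℝ) < x3)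
      (by linarith : (0:ℝ) < x5) h1a h1b h1c hu0 hv0 hw0 qa qb qc Q1 Q3 Q5
    have ea : a = 1/u := by rw [← euu, one_div_one_div]
    have eb : b = 1/v := by rw [← evv, one_div_one_div]
    have ec : c = 1/w := by rw [← eww, one_div_one_div]
    simp [Prod.ext_iff, ea, eb, ec]
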